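/- There do not exist an integer m ≥ 1 and real symmetric m×m matrices F0, F1, F2 with F0 positive semidefinite such that det(F0 + x1·F1 + x2·F2) = 1 − x1⁴ − x2⁴ for all (x1, x2) ∈ ℝ². -/

import Mathlib

lemma aux {m : ℕ} (lam : Fin m → ℝ)
    (h : ∀ t : ℝ, ∏ i, (1 + t * lam i) = 1 - 2 * t ^ 4) : False := by
  -- some eigenvalue is nonzero
  obtain ⟨j, hj⟩ : ∃ j, lam j ≠ 0 := by
    by_contra hall
    push_neg at hall
    have := h 1
    simp [hall] at this
    norm_num at this
  have key : ∀ t : ℝ, ∏ i, (1 - t ^ 2 * lam i ^ 2) = (1 - 2 * t ^ 4) ^ 2 := by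
    intro t
    have := congrArg₂ (· * ·) (h t) (h (-t))
    simp only [← Finset.prod_mul_distrib] at this
    rw [show (1 - 2*t^4)^2 = (1 - 2 * t ^ 4) * (1 - 2 * (-t) ^ 4) by ring, ← this]
    exact Finset.prod_congr rfl fun i _ => by ring
  set μ := lam j ^ 2 with hμdef
  have hμ : 0 < μ := by positivity
  set C := ∑ i, lam i ^ 2 with hCdef
  have hCμ : μ ≤ C := Finset.single_le_sum (f := fun i => lam i ^ 2) (fun i _ => by positivity) (Finset.mem_univ j)
  have hC : 0 < C := lt_of_lt_of_le hμ hCμ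
  set u := min (1 / C) (μ / 8) with hudef
  have hu : 0 < u := lt_min (by positivity) (by positivity)
  have huC : u * C ≤ 1 := by
    have : u ≤ 1 / C := min_le_left _ _
    calc u * C ≤ (1 / C) * C := by nlinarith
    _ = 1 := by field_simp
  have huμ : u ≤ μ / 8 := min_le_right _ _
  set t := Real.sqrt u with htdef
  have ht2 : t ^ 2 = u := Real.sq_sqrt hu.le
  have ht4 : t ^ 4 = u ^ 2 := by rw [← ht2]; ring
  have hkey := key t
  rw [ht4, ht2] at hkey
  -- each factor is in [0,1]
  have hfac : ∀ i : Fin m, 0 ≤ 1 - u * lam i ^ 2 := by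
    intro i
    have h1 : lam i ^ 2 ≤ C := Finset.single_le_sum (f := fun i => lam i ^ 2)
      (fun i _ => by positivity) (Finset.mem_univ i)
    nlinarith
  have hsplit : ∏ i, (1 - u * lam i ^ 2)
      = (1 - u * μ) * ∏ i ∈ Finset.univ.erase j, (1 - u * lam i ^ 2) :=
    (Finset.mul_prod_erase _ _ (Finset.mem_univ j)).symm
  have hrest : ∏ i ∈ Finset.univ.erase j, (1 - u * lam i ^ 2) ≤ 1 :=
    Finset.prod_le_one (fun i _ => hfac i) (fun i _ => by nlinarith [hfac i, hu.le])
  have hrest0 : 0 ≤ ∏ i ∈ Finset.univ.erase j, (1 - u * lam i ^ 2) :=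
    Finset.prod_nonneg fun i _ => hfac i
  have hbound : (1 - 2 * u ^ 2) ^ 2 ≤ 1 - u * μ := by
    rw [← hkey, hsplit]
    exact mul_le_of_le_one_right (hfac j) hrest
  nlinarith [sq_nonneg u, sq_nonneg (u*u)]

/-- There do not exist `m ≥ 1` and real symmetric `m × m` matrices
`F0, F1, F2` with `F0` positive semidefinite such that
`det (F0 + x1 • F1 + x2 • F2) = 1 − x1⁴ − x2⁴` for all `(x1, x2) ∈ ℝ²`. -/
theorem stmt16 :
    ¬ ∃ (m : ℕ), 1 ≤ m ∧ ∃ F0 F1 F2 : Matrix (Fin m) (Fin m) ℝ,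
      F0.IsSymm ∧ F1.IsSymm ∧ F2.IsSymm ∧ F0.PosSemidef ∧
      ∀ x1 x2 : ℝ, (F0 + x1 • F1 + x2 • F2).det = 1 - x1 ^ 4 - x2 ^ 4 := by
  rintro ⟨m, hm, F0, F1, F2, hsym0, hsym1, hsym2, hpsd, h⟩
  set M := F1 + F2 with hMdef
  have hdet : ∀ t : ℝ, (F0 + t • M).det = 1 - 2 * t ^ 4 := by
    intro t
    have := h t t
    rw [show F0 + t • F1 + t • F2 = F0 + t • M by rw [hMdef, smul_add, add_assoc]] at this
    rw [this]; ring
  have hdetF0 : F0.det = 1 := by simpa using hdet 0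
  set S := (open scoped MatrixOrder in CFC.sqrt F0) with hSdef
  have hSS : S * S = F0 := open scoped MatrixOrder in CFC.sqrt_mul_sqrt_self F0 hpsd.nonneg
  have hSherm : S.IsHermitian := open scoped MatrixOrder in (Matrix.nonneg_iff_posSemidef.mp (CFC.sqrt_nonneg F0)).1
  have hdetS : S.det * S.det = 1 := by rw [← Matrix.det_mul, hSS, hdetF0]
  have hSunit : IsUnit S.det := IsUnit.of_mul_eq_one _ hdetS
  have hMherm : M.IsHermitian := by
    rw [Matrix.IsHermitian, Matrix.conjTranspose_eq_transpose_of_trivial]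
    exact hsym1.add hsym2
  set A := S⁻¹ * M * S⁻¹ with hAdef
  have hAherm : A.IsHermitian := by
    rw [Matrix.IsHermitian, hAdef, Matrix.conjTranspose_mul, Matrix.conjTranspose_mul,
      Matrix.conjTranspose_nonsing_inv, hSherm.eq, hMherm.eq]
    rw [Matrix.mul_assoc]
  have hSAS : S * A * S = M := by
    rw [hAdef]
    rw [show S * (S⁻¹ * M * S⁻¹) * S = (S * S⁻¹) * M * (S⁻¹ * S) by
      simp only [Matrix.mul_assoc]]
    rw [Matrix.mul_nonsing_inv _ hSunit, Matrix.nonsing_inv_mul _ hSunit, Matrix.one_mul,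
      Matrix.mul_one]
  have hdet1A : ∀ t : ℝ, (1 + t • A).det = 1 - 2 * t ^ 4 := by
    intro t
    have hexp : S * (1 + t • A) * S = F0 + t • M := by
      rw [Matrix.mul_add, Matrix.mul_one, Matrix.add_mul, Matrix.mul_smul, Matrix.smul_mul,
        hSS, hSAS]
    have := congrArg Matrix.det hexp
    rw [Matrix.det_mul, Matrix.det_mul, hdet t] at this
    calc (1 + t • A).det = (S.det * S.det) * (1 + t • A).det := by rw [hdetS, one_mul]
    _ = S.det * (1 + t • A).det * S.det := by ring
    _ = 1 - 2 * t ^ 4 := this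
  set lam := hAherm.eigenvalues with hlam
  have key : ∀ t : ℝ, ∏ i, (1 + t * lam i) = 1 - 2 * t ^ 4 := by
    intro t
    set U : Matrix (Fin m) (Fin m) ℝ := (hAherm.eigenvectorUnitary : Matrix (Fin m) (Fin m) ℝ)
      with hU
    have hUU : U * star U = 1 := Matrix.mem_unitaryGroup_iff.mp hAherm.eigenvectorUnitary.2
    have hspec : A = U * Matrix.diagonal (RCLike.ofReal ∘ lam) * star U :=
      hAherm.spectral_theorem
    have hexp : 1 + t • A = U * Matrix.diagonal (fun i => 1 + t * lam i) * star U := by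
      rw [hspec]
      rw [show Matrix.diagonal (fun i => 1 + t * lam i)
          = 1 + t • Matrix.diagonal (RCLike.ofReal ∘ lam) by
        ext i j
        by_cases hij : i = j
        · subst hij
          simp [Matrix.one_apply_eq, RCLike.ofReal]
        · simp [Matrix.diagonal_apply_ne _ hij, Matrix.one_apply_ne hij]]
      rw [Matrix.mul_add, Matrix.add_mul, Matrix.mul_one, Matrix.mul_smul, Matrix.smul_mul, hUU]
    rw [← hdet1A t, hexp, Matrix.det_mul, Matrix.det_mul]
    rw [show U.det * (Matrix.diagonal fun i => 1 + t * lam i).det * (star U).det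
        = (U.det * (star U).det) * (Matrix.diagonal fun i => 1 + t * lam i).det by ring]
    rw [← Matrix.det_mul, hUU, Matrix.det_one, one_mul, Matrix.det_diagonal]
  exact aux lam key
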